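/- Let {C(o_i, r_i)}_{i ∈ I} be a countable family of closed spherical caps on S^3 ⊂ E^4 with radii r_i ∈ (0, π/2), whose interiors are pairwise disjoint, and which is unconditionally symmetric: for each i ∈ I and each coordinate index m ∈ {1,2,3,4}, the cap with center σ_m(o_i) (the reflection of o_i negating the m-th coordinate) and radius r_i also belongs to the family. Then there exist four pairwise orthogonal unit vectors w_1, w_2, w_3, w_4 ∈ E^4 such that every cap C(o_i, r_i) is contained in {x ∈ S^3 : ⟨x, w_k⟩ > 0} or in {x ∈ S^3 : ⟨x, w_k⟩ < 0} for some k ∈ {1,2,3,4}. -/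

import Mathlib

open scoped RealInnerProductSpace

private lemma fin4cases : ∀ k : Fin 4, k = 0 ∨ k = 1 ∨ k = 2 ∨ k = 3 := by decide

private lemma capHemi {F : Type*} [NormedAddCommGroup F] [InnerProductSpace ℝ F]
    {o w x : F} (ho : ‖o‖ = 1) (hw : ‖w‖ = 1) (hx : ‖x‖ = 1)
    {C S : ℝ} (hS : 0 ≤ S) (hC : 0 < C) (hCS : 1 ≤ C^2 + S^2)
    (ht : S < ⟪o, w⟫) (hxo : C ≤ ⟪x, o⟫) : 0 < ⟪x, w⟫ := by
  obtain ⟨c, hc⟩ : ∃ c, ⟪x, o⟫ = c := ⟨_, rfl⟩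
  obtain ⟨t, htd⟩ : ∃ t, ⟪o, w⟫ = t := ⟨_, rfl⟩
  rw [hc] at hxo
  rw [htd] at ht
  have hkey : ⟪x - c • o, w - t • o⟫ = ⟪x, w⟫ - c * t := by
    simp only [inner_sub_left, inner_sub_right, real_inner_smul_left, real_inner_smul_right,
      real_inner_self_eq_norm_sq, ho]
    rw [htd, hc]
    ring
  have hA : ‖x - c • o‖^2 = 1 - c^2 := by
    rw [norm_sub_sq_real, real_inner_smul_right, norm_smul, hx, ho, hc, Real.norm_eq_abs]
    rw [one_pow, mul_one, sq_abs]
    ring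
  have hB : ‖w - t • o‖^2 = 1 - t^2 := by
    rw [norm_sub_sq_real, real_inner_smul_right, norm_smul, hw, ho, real_inner_comm o w, htd,
      Real.norm_eq_abs, one_pow, mul_one, sq_abs]
    ring
  have hbound := abs_real_inner_le_norm (x - c • o) (w - t • o)
  rw [hkey] at hbound
  have hA0 : (0:ℝ) ≤ ‖x - c • o‖ := norm_nonneg _
  have hB0 : (0:ℝ) ≤ ‖w - t • o‖ := norm_nonneg _
  have h1 : ⟪x, w⟫ ≥ c * t - ‖x - c • o‖ * ‖w - t • o‖ := by
    have := (abs_le.mp hbound).1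
    linarith
  have hct : 0 < c * t := mul_pos (lt_of_lt_of_le hC hxo) (lt_of_le_of_lt hS ht)
  have hsq : (‖x - c • o‖ * ‖w - t • o‖)^2 < (c*t)^2 := by
    have h2 : ‖x - c • o‖^2 * ‖w - t • o‖^2 = (1 - c^2) * (1 - t^2) := by rw [hA, hB]
    have hc2 : C^2 ≤ c^2 := by nlinarith [lt_of_lt_of_le hC hxo]
    have ht2 : S^2 < t^2 := by nlinarith [lt_of_le_of_lt hS ht]
    have expand : (‖x - c • o‖ * ‖w - t • o‖)^2 = (1 - c^2) * (1 - t^2) := by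
      rw [mul_pow, hA, hB]
    rw [expand]
    nlinarith [hc2, ht2, hCS]
  have : ‖x - c • o‖ * ‖w - t • o‖ < c * t :=
    lt_of_pow_lt_pow_left₀ 2 hct.le hsq
  linarith

private lemma capsMeet {F : Type*} [NormedAddCommGroup F] [InnerProductSpace ℝ F]
    {u v : F} (hu : ‖u‖ = 1) (hv : ‖v‖ = 1) {Cu Cv : ℝ}
    (hCu : 0 < Cu) (hCv : 0 < Cv)
    (h1 : 2*Cu^2 < 1 + ⟪u, v⟫) (h2 : 2*Cv^2 < 1 + ⟪u, v⟫) :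
    ∃ x : F, ‖x‖ = 1 ∧ Cu < ⟪x, u⟫ ∧ Cv < ⟪x, v⟫ := by
  obtain ⟨g, hg⟩ : ∃ g, ⟪u, v⟫ = g := ⟨_, rfl⟩
  rw [hg] at h1 h2
  have hg1 : 0 < 1 + g := by nlinarith
  have hN2 : ‖u + v‖^2 = 2 + 2*g := by
    rw [norm_add_sq_real, hu, hv, hg]; ring
  have hNpos : 0 < ‖u + v‖ := by
    rcases (norm_nonneg (u + v)).lt_or_eq with h | h
    · exact h
    · exfalso; rw [← h] at hN2; nlinarith
  refine ⟨‖u + v‖⁻¹ • (u + v), ?_, ?_, ?_⟩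
  · rw [norm_smul, Real.norm_eq_abs, abs_inv, abs_of_pos hNpos, inv_mul_cancel₀ hNpos.ne']
  · have hxu : ⟪‖u + v‖⁻¹ • (u + v), u⟫ = ‖u + v‖⁻¹ * (1 + g) := by
      rw [real_inner_smul_left, inner_add_left, real_inner_self_eq_norm_sq, hu,
        real_inner_comm u v, hg]
      ring
    rw [hxu]
    rw [show ‖u + v‖⁻¹ * (1 + g) = (1 + g) / ‖u + v‖ by ring, lt_div_iff₀ hNpos]
    have e1 : (Cu * ‖u + v‖)^2 = Cu^2 * (2 + 2*g) := by rw [mul_pow, hN2]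
    have e2 : (Cu * ‖u + v‖)^2 < (1 + g)^2 := by
      nlinarith [mul_pos hg1 (show (0:ℝ) < 1 + g - 2*Cu^2 by linarith)]
    exact lt_of_pow_lt_pow_left₀ 2 hg1.le e2
  · have hxv : ⟪‖u + v‖⁻¹ • (u + v), v⟫ = ‖u + v‖⁻¹ * (1 + g) := by
      rw [real_inner_smul_left, inner_add_left, real_inner_self_eq_norm_sq, hv, hg]
      ring
    rw [hxv]
    rw [show ‖u + v‖⁻¹ * (1 + g) = (1 + g) / ‖u + v‖ by ring, lt_div_iff₀ hNpos]
    have e1 : (Cv * ‖u + v‖)^2 = Cv^2 * (2 + 2*g) := by rw [mul_pow, hN2]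
    have e2 : (Cv * ‖u + v‖)^2 < (1 + g)^2 := by
      nlinarith [mul_pos hg1 (show (0:ℝ) < 1 + g - 2*Cv^2 by linarith)]
    exact lt_of_pow_lt_pow_left₀ 2 hg1.le e2

private lemma sum4 (f : Fin 4 → ℝ) {a b c d : Fin 4}
    (hab : a ≠ b) (hac : a ≠ c) (had : a ≠ d) (hbc : b ≠ c) (hbd : b ≠ d) (hcd : c ≠ d) :
    ∑ m, f m = f a + f b + f c + f d := by
  have huniv : (Finset.univ : Finset (Fin 4)) = {a, b, c, d} := by
    symm
    apply Finset.eq_univ_of_card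
    rw [show ({a, b, c, d} : Finset (Fin 4)) = insert a (insert b (insert c {d})) from rfl]
    rw [Finset.card_insert_of_notMem (by simp [hab, hac, had]),
      Finset.card_insert_of_notMem (by simp [hbc, hbd]),
      Finset.card_insert_of_notMem (by simp [hcd])]
    simp
  rw [huniv, Finset.sum_insert (by simp [hab, hac, had]), Finset.sum_insert (by simp [hbc, hbd]),
    Finset.sum_insert (by simp [hcd]), Finset.sum_singleton]
  ring

private lemma cov4 {a b c d : Fin 4}
    (hab : a ≠ b) (hac : a ≠ c) (had : a ≠ d) (hbc : b ≠ c) (hbd : b ≠ d) (hcd : c ≠ d) :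
    ∀ m : Fin 4, m = a ∨ m = b ∨ m = c ∨ m = d := by
  intro m
  by_contra hm
  push_neg at hm
  obtain ⟨h1, h2, h3, h4⟩ := hm
  have huniv : ({a, b, c, d} : Finset (Fin 4)) = Finset.univ := by
    apply Finset.eq_univ_of_card
    rw [show ({a, b, c, d} : Finset (Fin 4)) = insert a (insert b (insert c {d})) from rfl]
    rw [Finset.card_insert_of_notMem (by simp [hab, hac, had]),
      Finset.card_insert_of_notMem (by simp [hbc, hbd]),
      Finset.card_insert_of_notMem (by simp [hcd])]
    simp
  have hmem : m ∈ ({a, b, c, d} : Finset (Fin 4)) := huniv ▸ Finset.mem_univ m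
  simp [h1, h2, h3, h4] at hmem

private lemma normsq4 (x : EuclideanSpace ℝ (Fin 4)) : ‖x‖^2 = ∑ m, (x m)^2 := by
  rw [EuclideanSpace.norm_eq, Real.sq_sqrt (by positivity)]
  simp [sq_abs]

private lemma inner4 (x y : EuclideanSpace ℝ (Fin 4)) : ⟪x, y⟫ = ∑ m, x m * y m := by
  simp [PiLp.inner_apply, RCLike.inner_apply, mul_comm]

private def TwoSupp {I : Type} (o : I → EuclideanSpace ℝ (Fin 4)) (r : I → ℝ) (i : I)
    (x y : Fin 4) : Prop :=
  x ≠ y ∧ (o i x)^2 = 1/2 ∧ (o i y)^2 = 1/2 ∧ (∀ m, m ≠ x → m ≠ y → o i m = 0) ∧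
    Real.sin (r i)^2 = 1/2

private lemma TwoSupp_swap {I : Type} {o : I → EuclideanSpace ℝ (Fin 4)} {r : I → ℝ} {i : I}
    {x y : Fin 4} (h : TwoSupp o r i x y) : TwoSupp o r i y x :=
  ⟨h.1.symm, h.2.2.1, h.2.1, fun m hy hx => h.2.2.2.1 m hx hy, h.2.2.2.2⟩

private lemma twoSupp_of_zeros {I : Type} {o : I → EuclideanSpace ℝ (Fin 4)} {r : I → ℝ} {i : I}
    (hnorm : ‖o i‖ = 1) (hs1 : Real.sin (r i)^2 < 1)
    (hA : ∀ m, o i m = 0 ∨ Real.sin (r i)^2 ≤ (o i m)^2)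
    (hbad : ∀ m, (o i m)^2 ≤ Real.sin (r i)^2)
    {x y z w : Fin 4} (hxy : x ≠ y) (hxz : x ≠ z) (hxw : x ≠ w) (hyz : y ≠ z) (hyw : y ≠ w)
    (hzw : z ≠ w) (hz : o i z = 0) (hw : o i w = 0) : TwoSupp o r i x y := by
  have hsum : (o i x)^2 + (o i y)^2 = 1 := by
    have h1 : ‖o i‖^2 = ∑ m, (o i m)^2 := normsq4 _
    rw [hnorm, sum4 _ hxy hxz hxw hyz hyw hzw, hz, hw] at h1
    nlinarith [h1]
  have hx0 : Real.sin (r i)^2 ≤ (o i x)^2 := by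
    rcases hA x with h | h
    · exfalso; rw [h] at hsum; have := hbad y; nlinarith
    · exact h
  have hy0 : Real.sin (r i)^2 ≤ (o i y)^2 := by
    rcases hA y with h | h
    · exfalso; rw [h] at hsum; have := hbad x; nlinarith
    · exact h
  have hqx : (o i x)^2 = Real.sin (r i)^2 := le_antisymm (hbad x) hx0
  have hqy : (o i y)^2 = Real.sin (r i)^2 := le_antisymm (hbad y) hy0
  have hs : Real.sin (r i)^2 = 1/2 := by rw [hqx, hqy] at hsum; linarith
  refine ⟨hxy, by rw [hqx, hs], by rw [hqy, hs], ?_, hs⟩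
  intro m hmx hmy
  rcases cov4 hxy hxz hxw hyz hyw hzw m with h | h | h | h
  · exact absurd h hmx
  · exact absurd h hmy
  · rw [h]; exact hz
  · rw [h]; exact hw

private lemma shared_coord_absurd {I : Type} {o : I → EuclideanSpace ℝ (Fin 4)} {r : I → ℝ}
    (hD : ∀ i j, i ≠ j → ⟪o i, o j⟫ ≤ 1 - 2 * min (Real.sin (r i)^2) (Real.sin (r j)^2))
    (hsym : ∀ i, ∀ m : Fin 4, ∃ j,
      o j = o i - (2 * o i m) • EuclideanSpace.single m (1 : ℝ) ∧ r j = r i)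
    {i j : I} {x y t : Fin 4} (hTi : TwoSupp o r i x y) (hTj : TwoSupp o r j x t)
    (htx : t ≠ x) (hty : t ≠ y) : False := by
  obtain ⟨hxy, hqix, hqiy, hzi, hsi⟩ := hTi
  obtain ⟨hxt, hqjx, hqjt, hzj, hsj⟩ := hTj
  have hg : ⟪o i, o j⟫ = o i x * o j x := by
    rw [inner4]
    apply Finset.sum_eq_single_of_mem x (Finset.mem_univ x)
    intro m _ hm
    by_cases hmy : m = y
    · subst hmy
      rw [hzj m hxy.symm (Ne.symm hty), mul_zero]
    · rw [hzi m hm hmy, zero_mul]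
  have hp2 : (o i x * o j x)^2 = 1/4 := by rw [mul_pow, hqix, hqjx]; norm_num
  have hot : o i t = 0 := hzi t htx hty
  have hjt : o j t ≠ 0 := by intro h; rw [h] at hqjt; norm_num at hqjt
  have hcase : o i x * o j x = 1/2 ∨ o i x * o j x = -(1/2) := by
    have h0 : (o i x * o j x - 1/2) * (o i x * o j x + 1/2) = 0 := by nlinarith
    rcases mul_eq_zero.mp h0 with h | h
    · left; linarith
    · right; linarith
  rcases hcase with hp | hp
  · have hij : i ≠ j := by intro h; rw [h] at hot; exact hjt hot
    have hle := hD i j hij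
    rw [hg, hp, hsi, hsj, min_self] at hle
    norm_num at hle
  · obtain ⟨j', hj'o, hj'r⟩ := hsym j x
    have hj't : o j' t = o j t := by
      rw [hj'o]
      simp [EuclideanSpace.single_apply, htx]
    have hg' : ⟪o i, o j'⟫ = 1/2 := by
      rw [hj'o, inner_sub_right, real_inner_smul_right, EuclideanSpace.inner_single_right, hg]
      simp only [starRingEnd_apply, star_trivial]
      nlinarith [hp]
    have hij' : i ≠ j' := by
      intro h
      rw [h, hj't] at hot
      exact hjt hot
    have hle := hD i j' hij'
    rw [hg', hsi, hj'r, hsj, min_self] at hle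
    norm_num at hle

private noncomputable def Wv (α β : ℝ) (p q : Fin 4) : EuclideanSpace ℝ (Fin 4) :=
  α • EuclideanSpace.single p (1:ℝ) + β • EuclideanSpace.single q (1:ℝ)

private lemma Wv_inner_left (α β : ℝ) (p q : Fin 4) (x : EuclideanSpace ℝ (Fin 4)) :
    ⟪x, Wv α β p q⟫ = α * x p + β * x q := by
  simp [Wv, inner_add_right, real_inner_smul_right, EuclideanSpace.inner_single_right]

private lemma Wv_inner_Wv (α β γ δ : ℝ) (p q p' q' : Fin 4) :
    ⟪Wv α β p q, Wv γ δ p' q'⟫ =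
      α * γ * (if p = p' then 1 else 0) + α * δ * (if p = q' then 1 else 0)
      + β * γ * (if q = p' then 1 else 0) + β * δ * (if q = q' then 1 else 0) := by
  simp [Wv, inner_add_left, inner_add_right, real_inner_smul_left, real_inner_smul_right,
    EuclideanSpace.inner_single_left, EuclideanSpace.single_apply]
  by_cases h1 : p = p' <;> by_cases h2 : p = q' <;> by_cases h3 : q = p' <;> by_cases h4 : q = q' <;>
    simp [h1, h2, h3, h4, eq_comm] <;> ring

private lemma Wv_norm (α β : ℝ) (p q : Fin 4) (hpq : p ≠ q) (hαβ : α^2 + β^2 = 1) :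
    ‖Wv α β p q‖ = 1 := by
  have h : ‖Wv α β p q‖^2 = 1 := by
    rw [← real_inner_self_eq_norm_sq, Wv_inner_Wv]
    simp [hpq, hpq.symm]
    nlinarith [hαβ]
  rw [← Real.sqrt_sq (norm_nonneg (Wv α β p q)), h, Real.sqrt_one]

private lemma lt_abs_of_sq_lt {s X : ℝ} (hs : 0 ≤ s) (h : s^2 < X^2) : s < |X| :=
  lt_of_pow_lt_pow_left₀ 2 (abs_nonneg X) (by rw [sq_abs]; exact h)

set_option maxHeartbeats 2000000 in
/-- A countable unconditionally symmetric packing of closed spherical caps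
`C(o_i, r_i)` (radii in `(0, π/2)`) on `S³ ⊂ E⁴` can be separated by four pairwise orthogonal
greatspheres: there are pairwise orthogonal unit vectors `w_1, …, w_4` such that every cap lies
in an open hemisphere `{⟪·, w_k⟫ > 0}` or `{⟪·, w_k⟫ < 0}`. Unconditional symmetry: for each
cap and each coordinate reflection `σ_m`, the reflected cap also belongs to the family. -/
theorem unconditionallySymmetric_capPacking_separated_by_four_greatspheres
    (I : Type) [Countable I]
    (o : I → EuclideanSpace ℝ (Fin 4)) (r : I → ℝ)
    (ho : ∀ i, ‖o i‖ = 1) (hr : ∀ i, r i ∈ Set.Ioo 0 (Real.pi / 2))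
    (hpack : ∀ i j, i ≠ j → Disjoint
      {x : EuclideanSpace ℝ (Fin 4) | ‖x‖ = 1 ∧ Real.cos (r i) < ⟪x, o i⟫}
      {x : EuclideanSpace ℝ (Fin 4) | ‖x‖ = 1 ∧ Real.cos (r j) < ⟪x, o j⟫})
    (hsym : ∀ i, ∀ m : Fin 4, ∃ j,
      o j = o i - (2 * o i m) • EuclideanSpace.single m (1 : ℝ) ∧ r j = r i) :
    ∃ w : Fin 4 → EuclideanSpace ℝ (Fin 4),
      (∀ k, ‖w k‖ = 1) ∧ (∀ k l, k ≠ l → ⟪w k, w l⟫ = 0) ∧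
      ∀ i, ∃ k : Fin 4,
        ({x : EuclideanSpace ℝ (Fin 4) | ‖x‖ = 1 ∧ Real.cos (r i) ≤ ⟪x, o i⟫} ⊆
            {x : EuclideanSpace ℝ (Fin 4) | ‖x‖ = 1 ∧ 0 < ⟪x, w k⟫}) ∨
        ({x : EuclideanSpace ℝ (Fin 4) | ‖x‖ = 1 ∧ Real.cos (r i) ≤ ⟪x, o i⟫} ⊆
            {x : EuclideanSpace ℝ (Fin 4) | ‖x‖ = 1 ∧ ⟪x, w k⟫ < 0}) := by
  classical
  have hsinpos : ∀ i, 0 < Real.sin (r i) := fun i =>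
    Real.sin_pos_of_pos_of_lt_pi (hr i).1 (lt_trans (hr i).2 (by linarith [Real.pi_pos]))
  have hcospos : ∀ i, 0 < Real.cos (r i) := fun i =>
    Real.cos_pos_of_mem_Ioo ⟨by linarith [(hr i).1, Real.pi_pos], (hr i).2⟩
  have hpyth : ∀ i, Real.sin (r i)^2 + Real.cos (r i)^2 = 1 := fun i => Real.sin_sq_add_cos_sq _
  have hs1 : ∀ i, Real.sin (r i)^2 < 1 := fun i => by nlinarith [hcospos i, hpyth i]
  -- Lemma D : packing forces centers apart
  have hD : ∀ i j, i ≠ j → ⟪o i, o j⟫ ≤ 1 - 2 * min (Real.sin (r i)^2) (Real.sin (r j)^2) := by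
    intro i j hij
    by_contra hg
    push_neg at hg
    have h1 : 2 * Real.cos (r i)^2 < 1 + ⟪o i, o j⟫ := by
      have := min_le_left (Real.sin (r i)^2) (Real.sin (r j)^2)
      nlinarith [hpyth i]
    have h2 : 2 * Real.cos (r j)^2 < 1 + ⟪o i, o j⟫ := by
      have := min_le_right (Real.sin (r i)^2) (Real.sin (r j)^2)
      nlinarith [hpyth j]
    obtain ⟨x, hx1, hxu, hxv⟩ := capsMeet (ho i) (ho j) (hcospos i) (hcospos j) h1 h2
    exact Set.disjoint_left.mp (hpack i j hij) ⟨hx1, hxu⟩ ⟨hx1, hxv⟩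
  -- Property A : coordinates of centers are 0 or at least sin r
  have hA : ∀ i m, o i m = 0 ∨ Real.sin (r i)^2 ≤ (o i m)^2 := by
    intro i m
    by_cases h0 : o i m = 0
    · exact Or.inl h0
    right
    obtain ⟨j, hjo, hjr⟩ := hsym i m
    have hjm : o j m = - o i m := by
      rw [hjo]
      simp [EuclideanSpace.single_apply]
      ring
    have hji : j ≠ i := by
      intro h
      rw [h] at hjm
      exact h0 (by linarith)
    have hinner : ⟪o i, o j⟫ = 1 - 2 * (o i m)^2 := by
      rw [hjo, inner_sub_right, real_inner_smul_right, EuclideanSpace.inner_single_right,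
        real_inner_self_eq_norm_sq, ho i]
      simp only [starRingEnd_apply, star_trivial]
      ring
    have hle := hD i j (Ne.symm hji)
    rw [hinner, hjr, min_self] at hle
    linarith
  -- The pairing of coordinates into two blocks
  obtain ⟨a, b, c, d, hab, hac, had, hbc, hbd, hcd, hblk⟩ : ∃ a b c d : Fin 4,
      a ≠ b ∧ a ≠ c ∧ a ≠ d ∧ b ≠ c ∧ b ≠ d ∧ c ≠ d ∧
      ∀ i, (∀ m, (o i m)^2 ≤ Real.sin (r i)^2) →
        (o i a ≠ 0 ∧ o i b ≠ 0) ∨ (o i c ≠ 0 ∧ o i d ≠ 0) := by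
    have hE : ∀ (i : I), (∀ m, (o i m)^2 ≤ Real.sin (r i)^2) →
        ∀ (p q u v : Fin 4), p ≠ q → p ≠ u → p ≠ v → q ≠ u → q ≠ v → u ≠ v →
        (o i p = 0 ∨ o i q = 0) → (o i u = 0 ∨ o i v = 0) →
        ∃ x y, TwoSupp o r i x y ∧ (x = p ∨ x = q) ∧ (y = u ∨ y = v) := by
      intro i hbad p q u v hpq hpu hpv hqu hqv huv h1 h2
      rcases h1 with h1 | h1 <;> rcases h2 with h2 | h2
      · exact ⟨q, v, twoSupp_of_zeros (ho i) (hs1 i) (hA i) hbad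
          hqv hpq.symm hqu (Ne.symm hpv) huv.symm hpu h1 h2, Or.inr rfl, Or.inr rfl⟩
      · exact ⟨q, u, twoSupp_of_zeros (ho i) (hs1 i) (hA i) hbad
          hqu hpq.symm hqv (Ne.symm hpu) huv hpv h1 h2, Or.inr rfl, Or.inl rfl⟩
      · exact ⟨p, v, twoSupp_of_zeros (ho i) (hs1 i) (hA i) hbad
          hpv hpq hpu (Ne.symm hqv) (Ne.symm huv) hqu h1 h2, Or.inl rfl, Or.inr rfl⟩
      · exact ⟨p, u, twoSupp_of_zeros (ho i) (hs1 i) (hA i) hbad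
          hpu hpq hpv (Ne.symm hqu) (Ne.symm huv).symm hqv h1 h2, Or.inl rfl, Or.inl rfl⟩
    by_cases h01 : ∀ i, (∀ m, (o i m)^2 ≤ Real.sin (r i)^2) →
        (o i 0 ≠ 0 ∧ o i 1 ≠ 0) ∨ (o i 2 ≠ 0 ∧ o i 3 ≠ 0)
    · exact ⟨0, 1, 2, 3, by decide, by decide, by decide, by decide, by decide, by decide, h01⟩
    push_neg at h01
    obtain ⟨i1, hbad1, hmiss⟩ := h01
    have hm1 : o i1 0 = 0 ∨ o i1 1 = 0 := by tauto
    have hm2 : o i1 2 = 0 ∨ o i1 3 = 0 := by tauto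
    obtain ⟨x, y, hT1, hx01, hy23⟩ := hE i1 hbad1 0 1 2 3 (by decide) (by decide) (by decide)
      (by decide) (by decide) (by decide) hm1 hm2
    have hgen : ∀ (x y u v : Fin 4), x ≠ y → x ≠ u → x ≠ v → y ≠ u → y ≠ v → u ≠ v →
        TwoSupp o r i1 x y →
        ∀ j, (∀ m, (o j m)^2 ≤ Real.sin (r j)^2) →
          (o j x ≠ 0 ∧ o j y ≠ 0) ∨ (o j u ≠ 0 ∧ o j v ≠ 0) := by
      intro x y u v hxy hxu hxv hyu hyv huv hT1 j hbadj
      by_contra hcon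
      have hm1' : o j x = 0 ∨ o j y = 0 := by tauto
      have hm2' : o j u = 0 ∨ o j v = 0 := by tauto
      obtain ⟨z, t, hT2, hz, ht⟩ := hE j hbadj x y u v hxy hxu hxv hyu hyv huv hm1' hm2'
      rcases hz with rfl | rfl <;> rcases ht with rfl | rfl
      · exact shared_coord_absurd hD hsym hT1 hT2 (Ne.symm hxu) hyu.symm
      · exact shared_coord_absurd hD hsym hT1 hT2 (Ne.symm hxv) hyv.symm
      · exact shared_coord_absurd hD hsym (TwoSupp_swap hT1) hT2 (Ne.symm hyu) hxu.symm
      · exact shared_coord_absurd hD hsym (TwoSupp_swap hT1) hT2 (Ne.symm hyv) hxv.symm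
    rcases hx01 with rfl | rfl <;> rcases hy23 with rfl | rfl
    · exact ⟨0, 2, 1, 3, by decide, by decide, by decide, by decide, by decide, by decide,
        hgen 0 2 1 3 (by decide) (by decide) (by decide) (by decide) (by decide) (by decide) hT1⟩
    · exact ⟨0, 3, 1, 2, by decide, by decide, by decide, by decide, by decide, by decide,
        hgen 0 3 1 2 (by decide) (by decide) (by decide) (by decide) (by decide) (by decide) hT1⟩
    · exact ⟨1, 2, 0, 3, by decide, by decide, by decide, by decide, by decide, by decide,
        hgen 1 2 0 3 (by decide) (by decide) (by decide) (by decide) (by decide) (by decide) hT1⟩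
    · exact ⟨1, 3, 0, 2, by decide, by decide, by decide, by decide, by decide, by decide,
        hgen 1 3 0 2 (by decide) (by decide) (by decide) (by decide) (by decide) (by decide) hT1⟩
  -- finiteness of the set of large caps
  have hBIGfin : Set.Finite {i : I | (2:ℝ)/5 < Real.sin (r i)} := by
    obtain ⟨t, htfin, htsub⟩ := Metric.totallyBounded_iff.mp
      ((isCompact_sphere (0 : EuclideanSpace ℝ (Fin 4)) 1).totallyBounded) ((2:ℝ)/5) (by norm_num)
    have hsub : {i : I | (2:ℝ)/5 < Real.sin (r i)} ⊆
        ⋃ y ∈ t, {i : I | (2:ℝ)/5 < Real.sin (r i) ∧ o i ∈ Metric.ball y (2/5)} := by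
      intro i hi
      have hoi : o i ∈ Metric.sphere (0 : EuclideanSpace ℝ (Fin 4)) 1 :=
        mem_sphere_zero_iff_norm.mpr (ho i)
      have hy := htsub hoi
      simp only [Set.mem_iUnion] at hy ⊢
      obtain ⟨y, hyt, hby⟩ := hy
      exact ⟨y, hyt, hi, hby⟩
    refine Set.Finite.subset (Set.Finite.biUnion htfin fun y _ => ?_) hsub
    apply Set.Subsingleton.finite
    intro i hi j hj
    by_contra hij
    have hle := hD i j hij
    have hmin : (4:ℝ)/25 ≤ min (Real.sin (r i)^2) (Real.sin (r j)^2) :=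
      le_min (by nlinarith [hi.1, hsinpos i]) (by nlinarith [hj.1, hsinpos j])
    have hns : ‖o i - o j‖^2 = 2 - 2*⟪o i, o j⟫ := by
      rw [norm_sub_sq_real, ho i, ho j]; ring
    have hdist : dist (o i) (o j) < 4/5 := by
      calc dist (o i) (o j) ≤ dist (o i) y + dist y (o j) := dist_triangle _ _ _
        _ < 2/5 + 2/5 := by
            have h1 := Metric.mem_ball.mp hi.2
            have h2 := Metric.mem_ball.mp hj.2
            rw [dist_comm y (o j)]
            exact add_lt_add h1 h2
        _ = 4/5 := by norm_num
    rw [dist_eq_norm] at hdist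
    nlinarith [norm_nonneg (o i - o j), hns, hle, hmin]
  -- margins
  have hchoice : ∀ i : I, ∃ ε : ℝ, 0 < ε ∧
      ((∃ m, Real.sin (r i) < |o i m|) → ∃ m, Real.sin (r i) + ε ≤ |o i m|) := by
    intro i
    by_cases h : ∃ m, Real.sin (r i) < |o i m|
    · obtain ⟨m, hm⟩ := h
      exact ⟨|o i m| - Real.sin (r i), by linarith, fun _ => ⟨m, by linarith⟩⟩
    · exact ⟨1, one_pos, fun h' => absurd h' h⟩
  choose e he1 he2 using hchoice
  obtain ⟨φ, hφpos, hφsmall, hφbig⟩ : ∃ φ : ℝ, 0 < φ ∧ φ ≤ 1/200 ∧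
      ∀ i, (2:ℝ)/5 < Real.sin (r i) → 2*φ ≤ e i := by
    set T := hBIGfin.toFinset with hT
    set Φ := insert (1:ℝ) (T.image e) with hΦ
    have hΦne : Φ.Nonempty := ⟨1, Finset.mem_insert_self _ _⟩
    have hφ0pos : 0 < Φ.min' hΦne := by
      have hmem := Φ.min'_mem hΦne
      rcases Finset.mem_insert.mp hmem with h | h
      · rw [h]; norm_num
      · obtain ⟨i, _, hei⟩ := Finset.mem_image.mp h
        rw [← hei]; exact he1 i
    refine ⟨min (Φ.min' hΦne) (1/100) / 2, by positivity, by
        have := min_le_right (Φ.min' hΦne) (1/100); linarith, ?_⟩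
    intro i hi
    have hiT : i ∈ T := by rw [hT]; exact (Set.Finite.mem_toFinset _).mpr hi
    have h1 : Φ.min' hΦne ≤ e i :=
      Finset.min'_le _ _ (Finset.mem_insert_of_mem (Finset.mem_image_of_mem e hiT))
    have h2 := min_le_left (Φ.min' hΦne) (1/100)
    linarith
  -- trig bounds for the small rotation angle
  have hsinφpos : 0 < Real.sin φ :=
    Real.sin_pos_of_pos_of_lt_pi hφpos (by nlinarith [Real.pi_gt_three])
  have hcosφpos : 0 < Real.cos φ :=
    Real.cos_pos_of_mem_Ioo ⟨by linarith [Real.pi_pos], by nlinarith [Real.pi_gt_three]⟩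
  have hsinφle : Real.sin φ ≤ φ := Real.sin_le hφpos.le
  have hcosφge : 1 - φ^2/2 ≤ Real.cos φ := Real.one_sub_sq_div_two_le_cos
  have hpythφ : Real.cos φ^2 + Real.sin φ^2 = 1 := Real.cos_sq_add_sin_sq φ
  -- the four separating directions
  obtain ⟨w, hw0, hw1, hw2, hw3⟩ : ∃ w : Fin 4 → EuclideanSpace ℝ (Fin 4),
      w 0 = Wv (Real.cos φ) (Real.sin φ) a b ∧ w 1 = Wv (-Real.sin φ) (Real.cos φ) a b ∧
      w 2 = Wv (Real.cos φ) (Real.sin φ) c d ∧ w 3 = Wv (-Real.sin φ) (Real.cos φ) c d :=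
    ⟨![Wv (Real.cos φ) (Real.sin φ) a b, Wv (-Real.sin φ) (Real.cos φ) a b,
       Wv (Real.cos φ) (Real.sin φ) c d, Wv (-Real.sin φ) (Real.cos φ) c d],
      rfl, rfl, rfl, rfl⟩
  have hwnorm : ∀ k, ‖w k‖ = 1 := by
    intro k
    rcases fin4cases k with rfl | rfl | rfl | rfl
    · rw [hw0]; exact Wv_norm _ _ _ _ hab hpythφ
    · rw [hw1]; exact Wv_norm _ _ _ _ hab (by nlinarith [hpythφ])
    · rw [hw2]; exact Wv_norm _ _ _ _ hcd hpythφ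
    · rw [hw3]; exact Wv_norm _ _ _ _ hcd (by nlinarith [hpythφ])
  have hsame : ∀ (α β γ δ : ℝ) (p q : Fin 4), p ≠ q →
      ⟪Wv α β p q, Wv γ δ p q⟫ = α*γ + β*δ := by
    intro α β γ δ p q hpq
    rw [Wv_inner_Wv]
    simp [hpq, hpq.symm]
  have hdisj : ∀ (α β γ δ : ℝ) (p q p' q' : Fin 4), p ≠ p' → p ≠ q' → q ≠ p' → q ≠ q' →
      ⟪Wv α β p q, Wv γ δ p' q'⟫ = 0 := by
    intro α β γ δ p q p' q' h1 h2 h3 h4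
    rw [Wv_inner_Wv]
    simp [h1, h2, h3, h4]
  have horth : ∀ k l, k ≠ l → ⟪w k, w l⟫ = 0 := by
    intro k l hkl
    rcases fin4cases k with rfl | rfl | rfl | rfl <;> rcases fin4cases l with rfl | rfl | rfl | rfl
    · exact absurd rfl hkl
    · rw [hw0, hw1, hsame _ _ _ _ _ _ hab]; ring
    · rw [hw0, hw2, hdisj _ _ _ _ _ _ _ _ hac had hbc hbd]
    · rw [hw0, hw3, hdisj _ _ _ _ _ _ _ _ hac had hbc hbd]
    · rw [hw1, hw0, hsame _ _ _ _ _ _ hab]; ring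
    · exact absurd rfl hkl
    · rw [hw1, hw2, hdisj _ _ _ _ _ _ _ _ hac had hbc hbd]
    · rw [hw1, hw3, hdisj _ _ _ _ _ _ _ _ hac had hbc hbd]
    · rw [hw2, hw0, hdisj _ _ _ _ _ _ _ _ hac.symm hbc.symm had.symm hbd.symm]
    · rw [hw2, hw1, hdisj _ _ _ _ _ _ _ _ hac.symm hbc.symm had.symm hbd.symm]
    · exact absurd rfl hkl
    · rw [hw2, hw3, hsame _ _ _ _ _ _ hcd]; ring
    · rw [hw3, hw0, hdisj _ _ _ _ _ _ _ _ hac.symm hbc.symm had.symm hbd.symm]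
    · rw [hw3, hw1, hdisj _ _ _ _ _ _ _ _ hac.symm hbc.symm had.symm hbd.symm]
    · rw [hw3, hw2, hsame _ _ _ _ _ _ hcd]; ring
    · exact absurd rfl hkl
  -- coordinate bounds
  have hcoordsq : ∀ (i : I) m, (o i m)^2 ≤ 1 := by
    intro i m
    have h1 := normsq4 (o i)
    rw [ho i] at h1
    have h2 : (o i m)^2 ≤ ∑ mm, (o i mm)^2 :=
      Finset.single_le_sum (fun mm _ => sq_nonneg (o i mm)) (Finset.mem_univ m)
    nlinarith
  have hcoord : ∀ (i : I) m, |o i m| ≤ 1 := by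
    intro i m
    nlinarith [hcoordsq i m, abs_nonneg (o i m), sq_abs (o i m)]
  -- margin criterion
  have hkey : ∀ (i : I) (u v : ℝ), Real.sin (r i) + 2*φ ≤ |u| → |u| ≤ 1 → |v| ≤ 1 →
      Real.sin (r i) < |Real.cos φ * u + Real.sin φ * v| := by
    intro i u v hu hu1 hv
    have h3 := abs_add_le (Real.cos φ * u + Real.sin φ * v) (-(Real.sin φ * v))
    have h2 : Real.cos φ * u + Real.sin φ * v + -(Real.sin φ * v) = Real.cos φ * u := by ring
    rw [h2, abs_neg] at h3
    rw [abs_mul, abs_mul, abs_of_pos hcosφpos, abs_of_pos hsinφpos] at h3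
    have h4 : |u| - φ^2/2 ≤ Real.cos φ * |u| := by
      nlinarith [mul_nonneg (sub_nonneg.mpr hcosφge) (abs_nonneg u), hu1, sq_nonneg φ]
    have h5 : Real.sin φ * |v| ≤ φ := by
      have := mul_le_mul_of_nonneg_left hv hsinφpos.le
      linarith
    nlinarith [hφpos, hφsmall]
  have hG : ∀ (i : I) (m : Fin 4), Real.sin (r i) + 2*φ ≤ |o i m| →
      ∃ k, Real.sin (r i) < |⟪o i, w k⟫| := by
    intro i m hm
    rcases cov4 hab hac had hbc hbd hcd m with h | h | h | h <;> rw [h] at hm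
    · refine ⟨0, ?_⟩
      rw [hw0, Wv_inner_left]
      exact hkey i (o i a) (o i b) hm (hcoord i a) (hcoord i b)
    · refine ⟨1, ?_⟩
      rw [hw1, Wv_inner_left]
      rw [show -Real.sin φ * o i a + Real.cos φ * o i b
          = Real.cos φ * o i b + Real.sin φ * (-(o i a)) by ring]
      exact hkey i (o i b) (-(o i a)) hm (hcoord i b) (by rw [abs_neg]; exact hcoord i a)
    · refine ⟨2, ?_⟩
      rw [hw2, Wv_inner_left]
      exact hkey i (o i c) (o i d) hm (hcoord i c) (hcoord i d)
    · refine ⟨3, ?_⟩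
      rw [hw3, Wv_inner_left]
      rw [show -Real.sin φ * o i c + Real.cos φ * o i d
          = Real.cos φ * o i d + Real.sin φ * (-(o i c)) by ring]
      exact hkey i (o i d) (-(o i c)) hm (hcoord i d) (by rw [abs_neg]; exact hcoord i c)
  -- separation of degenerate (bad) caps
  have hbadsep : ∀ i, (∀ m, (o i m)^2 ≤ Real.sin (r i)^2) →
      ∃ k, Real.sin (r i) < |⟪o i, w k⟫| := by
    intro i hbad
    have hq : ∀ m, o i m ≠ 0 → (o i m)^2 = Real.sin (r i)^2 := fun m hm =>
      le_antisymm (hbad m) ((hA i m).resolve_left hm)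
    have hsc := mul_pos hsinφpos hcosφpos
    have hXX : Real.cos φ^2 * (Real.sin (r i)^2) + Real.sin φ^2 * (Real.sin (r i)^2)
        = Real.sin (r i)^2 := by linear_combination (Real.sin (r i)^2) * hpythφ
    rcases hblk i hbad with ⟨h1, h2⟩ | ⟨h1, h2⟩
    · have hqa := hq a h1
      have hqb := hq b h2
      rcases lt_or_ge 0 (o i a * o i b) with hpos | hneg
      · refine ⟨0, ?_⟩
        rw [hw0, Wv_inner_left]
        apply lt_abs_of_sq_lt (hsinpos i).le
        have hex : (Real.cos φ * o i a + Real.sin φ * o i b)^2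
            = Real.cos φ^2 * (o i a)^2 + Real.sin φ^2 * (o i b)^2
              + 2*(Real.sin φ*Real.cos φ)*(o i a * o i b) := by ring
        rw [hex, hqa, hqb]
        nlinarith [mul_pos hsc hpos]
      · have hneg' : o i a * o i b < 0 := lt_of_le_of_ne hneg (mul_ne_zero h1 h2)
        refine ⟨1, ?_⟩
        rw [hw1, Wv_inner_left]
        apply lt_abs_of_sq_lt (hsinpos i).le
        have hex : (-Real.sin φ * o i a + Real.cos φ * o i b)^2
            = Real.sin φ^2 * (o i a)^2 + Real.cos φ^2 * (o i b)^2
              - 2*(Real.sin φ*Real.cos φ)*(o i a * o i b) := by ring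
        rw [hex, hqa, hqb]
        nlinarith [mul_pos hsc (neg_pos.mpr hneg')]
    · have hqc := hq c h1
      have hqd := hq d h2
      rcases lt_or_ge 0 (o i c * o i d) with hpos | hneg
      · refine ⟨2, ?_⟩
        rw [hw2, Wv_inner_left]
        apply lt_abs_of_sq_lt (hsinpos i).le
        have hex : (Real.cos φ * o i c + Real.sin φ * o i d)^2
            = Real.cos φ^2 * (o i c)^2 + Real.sin φ^2 * (o i d)^2
              + 2*(Real.sin φ*Real.cos φ)*(o i c * o i d) := by ring
        rw [hex, hqc, hqd]
        nlinarith [mul_pos hsc hpos]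
      · have hneg' : o i c * o i d < 0 := lt_of_le_of_ne hneg (mul_ne_zero h1 h2)
        refine ⟨3, ?_⟩
        rw [hw3, Wv_inner_left]
        apply lt_abs_of_sq_lt (hsinpos i).le
        have hex : (-Real.sin φ * o i c + Real.cos φ * o i d)^2
            = Real.sin φ^2 * (o i c)^2 + Real.cos φ^2 * (o i d)^2
              - 2*(Real.sin φ*Real.cos φ)*(o i c * o i d) := by ring
        rw [hex, hqc, hqd]
        nlinarith [mul_pos hsc (neg_pos.mpr hneg')]
  -- conclusion
  refine ⟨w, hwnorm, horth, ?_⟩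
  intro i
  have hsep : ∃ k, Real.sin (r i) < |⟪o i, w k⟫| := by
    by_cases hbad : ∀ m, (o i m)^2 ≤ Real.sin (r i)^2
    · exact hbadsep i hbad
    · push_neg at hbad
      obtain ⟨m0, hm0⟩ := hbad
      have hgood : ∃ m, Real.sin (r i) < |o i m| :=
        ⟨m0, lt_abs_of_sq_lt (hsinpos i).le hm0⟩
      rcases le_or_gt (Real.sin (r i)) (2/5) with hsmall | hbig
      · obtain ⟨m, hm⟩ : ∃ m, (1:ℝ)/4 ≤ (o i m)^2 := by
          by_contra hc
          push_neg at hc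
          have h1 := normsq4 (o i)
          rw [ho i, sum4 _ hab hac had hbc hbd hcd] at h1
          exact absurd h1 (by nlinarith [hc a, hc b, hc c, hc d])
        apply hG i m
        have h12 : 1/2 ≤ |o i m| := by
          nlinarith [abs_nonneg (o i m), sq_abs (o i m)]
        linarith
      · obtain ⟨m, hm⟩ := he2 i hgood
        have h2φ := hφbig i hbig
        exact hG i m (by linarith)
  obtain ⟨k, hk⟩ := hsep
  rcases le_or_gt (⟪o i, w k⟫) 0 with hneg | hpos
  · refine ⟨k, Or.inr ?_⟩
    rintro x ⟨hx1, hx2⟩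
    refine ⟨hx1, ?_⟩
    have h5 : Real.sin (r i) < ⟪o i, -(w k)⟫ := by
      rw [inner_neg_right]
      rw [abs_of_nonpos hneg] at hk
      linarith
    have h6 := capHemi (ho i) (by rw [norm_neg]; exact hwnorm k) hx1 (hsinpos i).le (hcospos i)
      (by linarith [hpyth i]) h5 hx2
    rw [inner_neg_right] at h6
    linarith
  · refine ⟨k, Or.inl ?_⟩
    rintro x ⟨hx1, hx2⟩
    refine ⟨hx1, ?_⟩
    have h5 : Real.sin (r i) < ⟪o i, w k⟫ := by rw [abs_of_pos hpos] at hk; exact hk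
    exact capHemi (ho i) (hwnorm k) hx1 (hsinpos i).le (hcospos i)
      (by linarith [hpyth i]) h5 hx2
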